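/- Define d̃(x,y) = inf{μ(B) : B a closed ball containing x and y}. Then d̃ is a quasi-metric: there exists A₁ > 0 such that d̃(x,y) ≤ A₁(d̃(x,z) + d̃(z,y)) for all x,y,z ∈ X. -/

import Mathlib

open MeasureTheory Metric

/-- `d̃(x,y) = inf{μ(B) : B a closed ball containing x and y}` is a quasi-metric:
there is `A₁ > 0` with `d̃(x,y) ≤ A₁(d̃(x,z) + d̃(z,y))`. -/
theorem dtilde_quasi_metric
    {X : Type*} [MetricSpace X] [MeasurableSpace X] [BorelSpace X]
    (μ : Measure X)
    (hvol : ∀ (x : X) (r : ℝ), 0 < r → 0 < (μ (closedBall x r)).toReal)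
    (C : ℝ) (hC : 0 < C)
    (hdouble : ∀ (x : X) (r : ℝ), 0 < r →
      (μ (closedBall x (2 * r))).toReal ≤ C * (μ (closedBall x r)).toReal)
    (dt : X → X → ℝ)
    (hdt : ∀ x y : X, dt x y =
      sInf {m : ℝ | ∃ (z : X) (r : ℝ), x ∈ closedBall z r ∧ y ∈ closedBall z r ∧
        m = (μ (closedBall z r)).toReal}) :
    ∃ A₁ > (0 : ℝ), ∀ x y z : X, dt x y ≤ A₁ * (dt x z + dt z y) := by
  refine ⟨C ^ 2, by positivity, fun x y z => ?_⟩
  -- C ≥ 1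
  have hC1 : 1 ≤ C := by
    have h1 := hvol x 1 one_pos
    have h2 := hvol x 2 two_pos
    have hfin : μ (closedBall x 2) ≠ ⊤ := by
      intro h
      rw [h, ENNReal.toReal_top] at h2
      exact lt_irrefl 0 h2
    have hmono : (μ (closedBall x 1)).toReal ≤ (μ (closedBall x 2)).toReal :=
      ENNReal.toReal_mono hfin
        (measure_mono (closedBall_subset_closedBall (by norm_num)))
    have hd := hdouble x 1 one_pos
    rw [mul_one] at hd
    nlinarith
  set S : Set ℝ := {m : ℝ | ∃ (c : X) (r : ℝ), x ∈ closedBall c r ∧ y ∈ closedBall c r ∧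
      m = (μ (closedBall c r)).toReal} with hS
  set S₁ : Set ℝ := {m : ℝ | ∃ (c : X) (r : ℝ), x ∈ closedBall c r ∧ z ∈ closedBall c r ∧
      m = (μ (closedBall c r)).toReal} with hS₁
  set S₂ : Set ℝ := {m : ℝ | ∃ (c : X) (r : ℝ), z ∈ closedBall c r ∧ y ∈ closedBall c r ∧
      m = (μ (closedBall c r)).toReal} with hS₂
  have hSbdd : BddBelow S := ⟨0, by rintro m ⟨c, r, -, -, rfl⟩; exact ENNReal.toReal_nonneg⟩
  have hS₁ne : S₁.Nonempty :=
    ⟨(μ (closedBall x (dist z x))).toReal, x, dist z x,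
      by simp [mem_closedBall, dist_nonneg], by simp [mem_closedBall], rfl⟩
  have hS₂ne : S₂.Nonempty :=
    ⟨(μ (closedBall z (dist y z))).toReal, z, dist y z,
      by simp [mem_closedBall, dist_nonneg], by simp [mem_closedBall], rfl⟩
  -- key claim
  have key : ∀ m₁ ∈ S₁, ∀ m₂ ∈ S₂, dt x y ≤ C ^ 2 * (m₁ + m₂) := by
    rintro m₁ ⟨c₁, r₁, hx1, hz1, rfl⟩ m₂ ⟨c₂, r₂, hz2, hy2, rfl⟩
    have hm₁ : (0:ℝ) ≤ (μ (closedBall c₁ r₁)).toReal := ENNReal.toReal_nonneg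
    have hm₂ : (0:ℝ) ≤ (μ (closedBall c₂ r₂)).toReal := ENNReal.toReal_nonneg
    have hmem : ∀ m ∈ S, dt x y ≤ m := fun m hm => (hdt x y) ▸ csInf_le hSbdd hm
    rw [mem_closedBall] at hx1 hz1 hz2 hy2
    rcases le_or_gt r₁ 0 with hr₁ | hr₁
    · -- x = z, use the second ball
      have hxz : x = z := by
        have hx : dist x c₁ = 0 := le_antisymm (hx1.trans hr₁) dist_nonneg
        have hz : dist z c₁ = 0 := le_antisymm (hz1.trans hr₁) dist_nonneg
        rw [dist_eq_zero] at hx hz; rw [hx, hz]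
      have : dt x y ≤ (μ (closedBall c₂ r₂)).toReal :=
        hmem _ ⟨c₂, r₂, by rw [mem_closedBall, hxz]; exact hz2, hy2, rfl⟩
      nlinarith [mul_nonneg (sq_nonneg C) hm₁, mul_le_mul_of_nonneg_right (by nlinarith : (1:ℝ) ≤ C ^ 2) hm₂]
    rcases le_or_gt r₂ 0 with hr₂ | hr₂
    · -- z = y, use the first ball
      have hzy : z = y := by
        have hz : dist z c₂ = 0 := le_antisymm (hz2.trans hr₂) dist_nonneg
        have hy : dist y c₂ = 0 := le_antisymm (hy2.trans hr₂) dist_nonneg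
        rw [dist_eq_zero] at hz hy; rw [hz, hy]
      have : dt x y ≤ (μ (closedBall c₁ r₁)).toReal :=
        hmem _ ⟨c₁, r₁, by rw [mem_closedBall]; exact hx1,
          by rw [mem_closedBall, ← hzy]; exact hz1, rfl⟩
      nlinarith [mul_nonneg (sq_nonneg C) hm₂, mul_le_mul_of_nonneg_right (by nlinarith : (1:ℝ) ≤ C ^ 2) hm₁]
    rcases le_total r₂ r₁ with hle | hle
    · -- expand first ball to radius 4r₁
      have hball : dt x y ≤ (μ (closedBall c₁ (4 * r₁))).toReal := by
        refine hmem _ ⟨c₁, 4 * r₁, ?_, ?_, rfl⟩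
        · rw [mem_closedBall]; linarith
        · rw [mem_closedBall]
          have h1 : dist y z ≤ dist y c₂ + dist z c₂ := dist_triangle_right y z c₂
          have h2 : dist y c₁ ≤ dist y z + dist z c₁ := dist_triangle y z c₁
          linarith
      have hd1 : (μ (closedBall c₁ (2 * (2 * r₁)))).toReal ≤
          C * (μ (closedBall c₁ (2 * r₁))).toReal := hdouble c₁ (2 * r₁) (by linarith)
      have hd2 : (μ (closedBall c₁ (2 * r₁))).toReal ≤
          C * (μ (closedBall c₁ r₁)).toReal := hdouble c₁ r₁ hr₁
      have h4 : (4 : ℝ) * r₁ = 2 * (2 * r₁) := by ring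
      rw [h4] at hball
      nlinarith
    · -- expand second ball to radius 4r₂
      have hball : dt x y ≤ (μ (closedBall c₂ (4 * r₂))).toReal := by
        refine hmem _ ⟨c₂, 4 * r₂, ?_, ?_, rfl⟩
        · rw [mem_closedBall]
          have h1 : dist x z ≤ dist x c₁ + dist z c₁ := dist_triangle_right x z c₁
          have h2 : dist x c₂ ≤ dist x z + dist z c₂ := dist_triangle x z c₂
          linarith
        · rw [mem_closedBall]; linarith
      have hd1 : (μ (closedBall c₂ (2 * (2 * r₂)))).toReal ≤
          C * (μ (closedBall c₂ (2 * r₂))).toReal := hdouble c₂ (2 * r₂) (by linarith)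
      have hd2 : (μ (closedBall c₂ (2 * r₂))).toReal ≤
          C * (μ (closedBall c₂ r₂)).toReal := hdouble c₂ r₂ hr₂
      have h4 : (4 : ℝ) * r₂ = 2 * (2 * r₂) := by ring
      rw [h4] at hball
      nlinarith
  -- pass to infima
  have hC2 : (0:ℝ) < C ^ 2 := by positivity
  have step1 : ∀ m₂ ∈ S₂, dt x y / C ^ 2 - m₂ ≤ sInf S₁ := by
    intro m₂ hm₂
    refine le_csInf hS₁ne fun m₁ hm₁ => ?_
    have := key m₁ hm₁ m₂ hm₂
    rw [div_sub' (ne_of_gt hC2), div_le_iff₀ hC2]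
    nlinarith
  have step2 : dt x y / C ^ 2 - sInf S₁ ≤ sInf S₂ := by
    refine le_csInf hS₂ne fun m₂ hm₂ => ?_
    have := step1 m₂ hm₂
    linarith
  have h1 : dt x z = sInf S₁ := hdt x z
  have h2 : dt z y = sInf S₂ := hdt z y
  rw [h1, h2]
  rw [div_sub' (ne_of_gt hC2), div_le_iff₀ hC2] at step2
  nlinarith
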